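/- Let (λ_ℓ) and (c_ℓ) be sequences of nonnegative reals such that for all s in (0, T], ∑_ℓ e^{-λ_ℓ s/2} c_ℓ ≤ A / s^{m/2}. Then for any t in (0, T] and λ ≥ m/t, the tail satisfies ∑_{ℓ : λ_ℓ ≥ λ} e^{-λ_ℓ t/2} c_ℓ ≤ e^{-λ t/2} * A * (2e/m)^{m/2} * λ^{m/2}. -/
import Mathlib


theorem stmt_7 (m : ℕ) (hm : 1 ≤ m) (T A : ℝ) (hT : 0 < T) (hA : 0 < A)
    (lam c : ℕ → ℝ) (hlam : ∀ ℓ, 0 ≤ lam ℓ) (hc : ∀ ℓ, 0 ≤ c ℓ)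
    (hsum : ∀ s : ℝ, 0 < s → s ≤ T → Summable (fun ℓ => Real.exp (-lam ℓ * s / 2) * c ℓ))
    (hbound : ∀ s : ℝ, 0 < s → s ≤ T →
      ∑' ℓ, Real.exp (-lam ℓ * s / 2) * c ℓ ≤ A / s ^ ((m : ℝ) / 2))
    (t : ℝ) (ht0 : 0 < t) (htT : t ≤ T) (lam0 : ℝ) (hlam0 : (m : ℝ) / t ≤ lam0) :
    ∑' ℓ, (if lam0 ≤ lam ℓ then Real.exp (-lam ℓ * t / 2) * c ℓ else 0) ≤
      Real.exp (-lam0 * t / 2) * A * (2 * Real.exp 1 / m) ^ ((m : ℝ) / 2) *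
        lam0 ^ ((m : ℝ) / 2) := by
  have hm0 : (0:ℝ) < (m:ℝ) := by exact_mod_cast hm
  have hlam0pos : 0 < lam0 := lt_of_lt_of_le (div_pos hm0 ht0) hlam0
  set s : ℝ := (m:ℝ) / lam0 with hs_def
  have hs0 : 0 < s := div_pos hm0 hlam0pos
  have hst : s ≤ t := by
    rw [hs_def, div_le_iff₀ hlam0pos]
    calc (m:ℝ) = ((m:ℝ)/t) * t := by field_simp
    _ ≤ lam0 * t := by
        exact mul_le_mul_of_nonneg_right hlam0 ht0.le
    _ = t * lam0 := mul_comm _ _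
  have hsT : s ≤ T := hst.trans htT
  have hts : 0 ≤ t - s := by linarith
  -- pointwise bound
  have hpt : ∀ ℓ, (if lam0 ≤ lam ℓ then Real.exp (-lam ℓ * t / 2) * c ℓ else 0)
      ≤ Real.exp (-lam0 * (t - s) / 2) * (Real.exp (-lam ℓ * s / 2) * c ℓ) := by
    intro ℓ
    by_cases h : lam0 ≤ lam ℓ
    · simp only [h, if_true]
      have h1 : Real.exp (-lam ℓ * t / 2)
          = Real.exp (-lam ℓ * (t - s) / 2) * Real.exp (-lam ℓ * s / 2) := by
        rw [← Real.exp_add]; ring_nf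
      rw [h1]
      have h2 : Real.exp (-lam ℓ * (t - s) / 2) ≤ Real.exp (-lam0 * (t - s) / 2) := by
        apply Real.exp_le_exp.mpr
        have := mul_le_mul_of_nonneg_right h hts
        nlinarith
      calc Real.exp (-lam ℓ * (t - s) / 2) * Real.exp (-lam ℓ * s / 2) * c ℓ
          ≤ Real.exp (-lam0 * (t - s) / 2) * Real.exp (-lam ℓ * s / 2) * c ℓ := by
            apply mul_le_mul_of_nonneg_right _ (hc ℓ)
            exact mul_le_mul_of_nonneg_right h2 (Real.exp_pos _).le
        _ = Real.exp (-lam0 * (t - s) / 2) * (Real.exp (-lam ℓ * s / 2) * c ℓ) := by ring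
    · simp only [h, if_false]
      exact mul_nonneg (Real.exp_pos _).le (mul_nonneg (Real.exp_pos _).le (hc ℓ))
  have hsummaj : Summable (fun ℓ => Real.exp (-lam0 * (t - s) / 2) *
      (Real.exp (-lam ℓ * s / 2) * c ℓ)) := (hsum s hs0 hsT).mul_left _
  have hsum1 : Summable (fun ℓ => (if lam0 ≤ lam ℓ then Real.exp (-lam ℓ * t / 2) * c ℓ else 0)) := by
    apply Summable.of_nonneg_of_le _ hpt hsummaj
    intro ℓ
    by_cases h : lam0 ≤ lam ℓ <;> simp only [h, if_true, if_false]
    · exact mul_nonneg (Real.exp_pos _).le (hc ℓ)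
    · exact le_refl 0
  calc ∑' ℓ, (if lam0 ≤ lam ℓ then Real.exp (-lam ℓ * t / 2) * c ℓ else 0)
      ≤ ∑' ℓ, Real.exp (-lam0 * (t - s) / 2) * (Real.exp (-lam ℓ * s / 2) * c ℓ) :=
        Summable.tsum_le_tsum hpt hsum1 hsummaj
    _ = Real.exp (-lam0 * (t - s) / 2) * ∑' ℓ, Real.exp (-lam ℓ * s / 2) * c ℓ := tsum_mul_left
    _ ≤ Real.exp (-lam0 * (t - s) / 2) * (A / s ^ ((m : ℝ) / 2)) := by
        apply mul_le_mul_of_nonneg_left (hbound s hs0 hsT) (Real.exp_pos _).le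
    _ ≤ Real.exp (-lam0 * t / 2) * A * (2 * Real.exp 1 / m) ^ ((m : ℝ) / 2) *
        lam0 ^ ((m : ℝ) / 2) := by
        have hls : lam0 * s = (m:ℝ) := by
          rw [hs_def]; field_simp
        have hexp : Real.exp (-lam0 * (t - s) / 2)
            = Real.exp (-lam0 * t / 2) * Real.exp ((m:ℝ) / 2) := by
          rw [← Real.exp_add]
          congr 1
          have : lam0 * s = (m:ℝ) := hls
          nlinarith
        rw [hexp]
        have hsrp : s ^ ((m:ℝ)/2) > 0 := Real.rpow_pos_of_pos hs0 _
        rw [mul_assoc, mul_div_assoc']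
        have key : Real.exp ((m:ℝ)/2) * A / s ^ ((m:ℝ)/2)
            ≤ A * (2 * Real.exp 1 / m) ^ ((m : ℝ) / 2) * lam0 ^ ((m : ℝ) / 2) := by
          have h1 : Real.exp ((m:ℝ)/2) = Real.exp 1 ^ ((m:ℝ)/2) := (Real.exp_one_rpow _).symm
          have hb : Real.exp 1 * lam0 / m = Real.exp 1 / s := by
            rw [hs_def]; field_simp
          have h2 : Real.exp ((m:ℝ)/2) * A / s ^ ((m:ℝ)/2)
              = A * (Real.exp 1 * lam0 / m) ^ ((m:ℝ)/2) := by
            rw [hb, Real.div_rpow (Real.exp_pos 1).le hs0.le, h1]; ring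
          rw [h2]
          have h3 : (2 * Real.exp 1 / m) ^ ((m : ℝ) / 2) * lam0 ^ ((m : ℝ) / 2)
              = (2 * Real.exp 1 / m * lam0) ^ ((m:ℝ)/2) := by
            rw [← Real.mul_rpow (by positivity) hlam0pos.le]
          rw [mul_assoc, h3]
          apply mul_le_mul_of_nonneg_left _ hA.le
          apply Real.rpow_le_rpow (by positivity) _ (by positivity)
          rw [div_mul_eq_mul_div, div_le_div_iff₀ hm0 hm0]
          nlinarith [Real.exp_pos 1, mul_pos (mul_pos (Real.exp_pos 1) hlam0pos) hm0]
        calc Real.exp (-lam0 * t / 2) * (Real.exp ((m:ℝ)/2) * A / s ^ ((m:ℝ)/2))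
            ≤ Real.exp (-lam0 * t / 2) * (A * (2 * Real.exp 1 / m) ^ ((m : ℝ) / 2) *
              lam0 ^ ((m : ℝ) / 2)) :=
              mul_le_mul_of_nonneg_left key (Real.exp_pos _).le
          _ = Real.exp (-lam0 * t / 2) * A * (2 * Real.exp 1 / m) ^ ((m : ℝ) / 2) *
              lam0 ^ ((m : ℝ) / 2) := by ring
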